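/- Let k ≥ 4 and A = {a_0, a_1, ..., a_{k-1}} be a set of k nonnegative integers with 0 = a_0 < a_1 < ... < a_{k-1} and gcd(A) = 1. If a_{k-1} ≤ 2k - 5, then |S(A)| ≥ a_{k-1} + (k-1)(k-2)/2 + 1; if a_{k-1} ≥ 2k - 4, then |S(A)| ≥ θk - 3 + (k-1)(k-2)/2, where θ = (1+√5)/2. -/

import Mathlib

open Pointwise

/-- Set of all nonempty subset sums of a finite set of integers. -/
def SetSub (A : Finset ℤ) : Finset ℤ :=
  (A.powerset.filter (fun B => B.Nonempty)).image fun B => B.sum id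

/-- Set of all subset sums over subsets of cardinality at least `α`. -/
def SetSubAlpha (α : ℕ) (A : Finset ℤ) : Finset ℤ :=
  (A.powerset.filter (fun B => α ≤ B.card)).image fun B => B.sum id

/-- Set of all nonempty subsequence (sub-multiset) sums of a multiset of integers. -/
def SeqSub (A : Multiset ℤ) : Finset ℤ :=
  ((A.powerset.filter (fun B => B ≠ 0)).map Multiset.sum).toFinset

/-- Set of all sub-multiset sums with at least `α` terms. -/
def SeqSubAlpha (α : ℕ) (A : Multiset ℤ) : Finset ℤ :=
  ((A.powerset.filter (fun B => α ≤ Multiset.card B)).map Multiset.sum).toFinset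

/-- `h`-fold sumset of a finite set of integers. -/
def hfold : ℕ → Finset ℤ → Finset ℤ
  | 0, _ => {0}
  | n + 1, X => X + hfold n X

/-- Restricted 2-fold sumset: sums of two distinct elements. -/
def Res2 (A : Finset ℤ) : Finset ℤ :=
  ((A ×ˢ A).filter (fun p => p.1 ≠ p.2)).image fun p => p.1 + p.2

/-- The golden ratio. -/
noncomputable def theta : ℝ := (1 + Real.sqrt 5) / 2
-- basics
lemma mem_setSub {A : Finset ℤ} {x : ℤ} :
    x ∈ SetSub A ↔ ∃ B : Finset ℤ, B ⊆ A ∧ B.Nonempty ∧ B.sum id = x := by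
  simp [SetSub, Finset.mem_image, Finset.mem_filter, Finset.mem_powerset]
  tauto

lemma sum_mem_setSub {A B : Finset ℤ} (h : B ⊆ A) (hne : B.Nonempty) :
    B.sum id ∈ SetSub A := mem_setSub.2 ⟨B, h, hne, rfl⟩

lemma zero_mem_setSub {A : Finset ℤ} (h : (0:ℤ) ∈ A) : (0:ℤ) ∈ SetSub A := by
  have := sum_mem_setSub (B := {0}) (by simpa using h) ⟨0, by simp⟩
  simpa using this

lemma single_mem_setSub {A : Finset ℤ} {a : ℤ} (h : a ∈ A) : a ∈ SetSub A := by
  have := sum_mem_setSub (B := {a}) (by simpa using h) ⟨a, by simp⟩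
  simpa using this

lemma pair_mem_setSub {A : Finset ℤ} {a b : ℤ} (ha : a ∈ A) (hb : b ∈ A) (hne : a ≠ b) :
    a + b ∈ SetSub A := by
  have hsub : ({a, b} : Finset ℤ) ⊆ A := by
    intro x hx; rcases Finset.mem_insert.1 hx with h | h
    · simpa [h]
    · simp at h; simpa [h]
  have := sum_mem_setSub (A := A) (B := {a,b}) hsub ⟨a, by simp⟩
  rwa [Finset.sum_pair hne] at this

lemma setSub_nonneg {A : Finset ℤ} (hA : ∀ x ∈ A, (0:ℤ) ≤ x) {s : ℤ} (hs : s ∈ SetSub A) :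
    0 ≤ s := by
  obtain ⟨B, hBA, -, rfl⟩ := mem_setSub.1 hs
  exact Finset.sum_nonneg fun i hi => hA i (hBA hi)

lemma setSub_le_sum {A : Finset ℤ} (hA : ∀ x ∈ A, (0:ℤ) ≤ x) {s : ℤ} (hs : s ∈ SetSub A) :
    s ≤ A.sum id := by
  obtain ⟨B, hBA, -, rfl⟩ := mem_setSub.1 hs
  exact Finset.sum_le_sum_of_subset_of_nonneg hBA (fun i hi _ => hA i hi)

lemma sum_mem_setSub_self {A : Finset ℤ} (h : A.Nonempty) : A.sum id ∈ SetSub A :=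
  sum_mem_setSub (Finset.Subset.refl A) h

lemma setSub_symm {A : Finset ℤ} (h0 : (0:ℤ) ∈ A) {s : ℤ} (hs : s ∈ SetSub A) :
    A.sum id - s ∈ SetSub A := by
  obtain ⟨B, hBA, hBne, rfl⟩ := mem_setSub.1 hs
  by_cases hBfull : A ⊆ B
  · have : B = A := Finset.Subset.antisymm hBA hBfull
    subst this
    have : B.sum id - B.sum id = (({0}: Finset ℤ)).sum id := by simp
    rw [this]
    exact sum_mem_setSub (by simpa using h0) ⟨0, by simp⟩
  · obtain ⟨x, hxA, hxB⟩ := Finset.not_subset.1 hBfull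
    have hne : (A \ B).Nonempty := ⟨x, Finset.mem_sdiff.2 ⟨hxA, hxB⟩⟩
    have hsum : (A \ B).sum id = A.sum id - B.sum id := by
      rw [Finset.sum_sdiff_eq_sub hBA]
    rw [← hsum]
    exact sum_mem_setSub (Finset.sdiff_subset) hne

lemma setSub_mono {A B : Finset ℤ} (h : A ⊆ B) : SetSub A ⊆ SetSub B := by
  intro x hx
  obtain ⟨C, hCA, hCne, rfl⟩ := mem_setSub.1 hx
  exact sum_mem_setSub (hCA.trans h) hCne

lemma add_mem_setSub {A : Finset ℤ} {z : ℤ} (hz : z ∈ A) {s : ℤ}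
    (hs : s ∈ SetSub (A.erase z)) : s + z ∈ SetSub A := by
  obtain ⟨B, hBA, hBne, rfl⟩ := mem_setSub.1 hs
  have hzB : z ∉ B := fun h => (Finset.mem_erase.1 (hBA h)).1 rfl
  have : (insert z B).sum id = B.sum id + z := by
    rw [Finset.sum_insert hzB]; simp [add_comm]
  rw [← this]
  refine sum_mem_setSub ?_ ⟨z, Finset.mem_insert_self _ _⟩
  intro x hx
  rcases Finset.mem_insert.1 hx with h | h
  · simpa [h]
  · exact (Finset.mem_erase.1 (hBA h)).2

section counting
variable {A : Finset ℤ} {z : ℤ}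

/-- Increment: card S(A) ≥ card S(A') + card Q. -/
lemma card_setSub_ge_increment (hz : z ∈ A) :
    (SetSub (A.erase z)).card
      + ((SetSub (A.erase z)).filter (fun s => s + z ∉ SetSub (A.erase z))).card
      ≤ (SetSub A).card := by
  classical
  set S' := SetSub (A.erase z) with hS'
  set Q := S'.filter (fun s => s + z ∉ S') with hQ
  have hsub : S' ∪ Q.image (fun s => s + z) ⊆ SetSub A := by
    intro x hx
    rcases Finset.mem_union.1 hx with h | h
    · exact setSub_mono (Finset.erase_subset _ _) h
    · obtain ⟨s, hsQ, rfl⟩ := Finset.mem_image.1 h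
      exact add_mem_setSub hz (Finset.mem_filter.1 hsQ).1
  have hdisj : Disjoint S' (Q.image (fun s => s + z)) := by
    rw [Finset.disjoint_right]
    intro x hx hx'
    obtain ⟨s, hsQ, rfl⟩ := Finset.mem_image.1 hx
    exact (Finset.mem_filter.1 hsQ).2 hx'
  have hinj : (Q.image (fun s => s + z)).card = Q.card :=
    Finset.card_image_of_injective _ (add_left_injective z)
  calc S'.card + Q.card = (S' ∪ Q.image (fun s => s + z)).card := by
        rw [Finset.card_union_of_disjoint hdisj, hinj]
    _ ≤ (SetSub A).card := Finset.card_le_card hsub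

/-- Q is at least as big as the number of sums below z. -/
lemma card_Q_ge_low (h0 : (0:ℤ) ∈ A.erase z) (hnn : ∀ x ∈ A.erase z, (0:ℤ) ≤ x) :
    ((SetSub (A.erase z)).filter (fun s => s < z)).card
      ≤ ((SetSub (A.erase z)).filter (fun s => s + z ∉ SetSub (A.erase z))).card := by
  classical
  set A' := A.erase z
  set S' := SetSub A' with hS'
  set N' := A'.sum id with hN'
  apply Finset.card_le_card_of_injOn (fun s => N' - s)
  · intro s hs
    obtain ⟨hsS, hslt⟩ := Finset.mem_filter.1 hs
    refine Finset.mem_filter.2 ⟨setSub_symm h0 hsS, ?_⟩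
    intro hmem
    have hle := setSub_le_sum hnn hmem
    have hle' : N' - s + z ≤ N' := hle
    omega
  · intro a _ b _ h
    have h' : N' - a = N' - b := h
    omega

end counting

lemma card_le_of_subset_Icc {A : Finset ℤ} {lo hi : ℤ} (h : A ⊆ Finset.Icc lo hi)
    (hlo : lo ≤ hi) : (A.card : ℤ) ≤ hi + 1 - lo := by
  have := Finset.card_le_card h
  rw [Int.card_Icc] at this
  have h2 : ((hi + 1 - lo).toNat : ℤ) = hi + 1 - lo := Int.toNat_of_nonneg (by omega)
  calc (A.card : ℤ) ≤ ((hi + 1 - lo).toNat : ℤ) := by exact_mod_cast this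
    _ = hi + 1 - lo := h2

/-- Slice lemma. -/
lemma slice_mem {A : Finset ℤ} {b m y : ℤ} (hA : A.Nonempty)
    (h0 : (0:ℤ) ∈ A) (hnn : ∀ x ∈ A, 0 ≤ x)
    (hb : A.max' hA = b) (hm : (A.card : ℤ) = m + 1)
    (hy1 : 1 ≤ y) (hy2 : y ≤ m - 1 - (b - m)) :
    b + y ∈ SetSub A := by
  classical
  have hbmax : ∀ x ∈ A, x ≤ b := by intro x hx; rw [← hb]; exact A.le_max' x hx
  have hb0 : 0 ≤ b := hbmax 0 h0
  set δ : ℤ := b - m with hδdef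
  have hδ0 : 0 ≤ δ := by
    have hsub : A ⊆ Finset.Icc (0:ℤ) b := fun x hx =>
      Finset.mem_Icc.2 ⟨hnn x hx, hbmax x hx⟩
    have := card_le_of_subset_Icc hsub hb0
    omega
  have hm2 : 2 + δ ≤ m := by omega
  set x : ℤ := b + y with hxdef
  set It : Finset ℤ := Finset.Ico y (y + δ + 1) with hIt
  set Missing : Finset ℤ := (Finset.Icc (1:ℤ) b) \ A with hMis
  -- card of Missing is δ
  have hAe : A.erase 0 = Finset.Icc (1:ℤ) b ∩ A := by
    ext w
    simp only [Finset.mem_erase, Finset.mem_inter, Finset.mem_Icc]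
    constructor
    · rintro ⟨hw0, hwA⟩
      exact ⟨⟨by have := hnn w hwA; omega, hbmax w hwA⟩, hwA⟩
    · rintro ⟨⟨h1, _⟩, hwA⟩
      exact ⟨by omega, hwA⟩
  have hMiscard : (Missing.card : ℤ) = δ := by
    have h1 : ((Finset.Icc (1:ℤ) b).card : ℤ) = b := by
      rw [Int.card_Icc]
      have : ((b + 1 - 1).toNat : ℤ) = b + 1 - 1 := Int.toNat_of_nonneg (by omega)
      omega
    have h2 : (Finset.Icc (1:ℤ) b ∩ A).card = A.card - 1 := by
      rw [← hAe, Finset.card_erase_of_mem h0]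
    have h3 := Finset.card_sdiff_add_card_inter (Finset.Icc (1:ℤ) b) A
    have hA1 : 1 ≤ A.card := Finset.card_pos.2 hA
    rw [hMis]
    rw [h2] at h3
    have h4 : ((Finset.Icc (1:ℤ) b \ A).card : ℤ) + ((A.card :ℤ) - 1) = ((Finset.Icc (1:ℤ) b).card : ℤ) := by
      push_cast [← h3]
      omega
    omega
  -- pigeonhole: some t in It has both t and x - t in A
  have hex : ∃ t ∈ It, t ∈ A ∧ x - t ∈ A := by
    by_contra hcon
    push_neg at hcon
    have hinj : ∀ t ∈ It, (fun t => if t ∈ A then x - t else t) t ∈ Missing := by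
      intro t ht
      simp only [hIt, Finset.mem_Ico] at ht
      show (if t ∈ A then x - t else t) ∈ Missing
      by_cases htA : t ∈ A
      · have hxtA : x - t ∉ A := hcon t (by
          simp only [hIt, Finset.mem_Ico]; omega) htA
        rw [if_pos htA]
        simp only [hMis, Finset.mem_sdiff, Finset.mem_Icc]
        exact ⟨⟨by omega, by omega⟩, hxtA⟩
      · rw [if_neg htA]
        simp only [hMis, Finset.mem_sdiff, Finset.mem_Icc]
        exact ⟨⟨by omega, by omega⟩, htA⟩
    have hcard := Finset.card_le_card_of_injOn _ hinj ?_
    · have hItcard : (It.card : ℤ) = δ + 1 := by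
        rw [hIt, Int.card_Ico]
        have : ((y + δ + 1 - y).toNat : ℤ) = y + δ + 1 - y := Int.toNat_of_nonneg (by omega)
        omega
      omega
    · intro t1 h1 t2 h2 heq
      have heq' : (if t1 ∈ A then x - t1 else t1) = (if t2 ∈ A then x - t2 else t2) := heq
      simp only [hIt, Finset.coe_Ico, Set.mem_Ico] at h1 h2
      by_cases hA1 : t1 ∈ A <;> by_cases hA2 : t2 ∈ A
      · rw [if_pos hA1, if_pos hA2] at heq'; omega
      · rw [if_pos hA1, if_neg hA2] at heq'; omega
      · rw [if_neg hA1, if_pos hA2] at heq'; omega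
      · rw [if_neg hA1, if_neg hA2] at heq'; omega
  obtain ⟨t, htIt, htA, hxtA⟩ := hex
  simp only [hIt, Finset.mem_Ico] at htIt
  have hne : t ≠ x - t := by omega
  have := pair_mem_setSub htA hxtA hne
  have heq : t + (x - t) = b + y := by omega
  rwa [heq] at this

/-- INC+ : if the second largest element is ≥ 2n-4 and gcd = 1,
then there are at least n+1 sums s of A' with s + z not a sum of A'. -/
lemma incplus {A : Finset ℤ} (hA : A.Nonempty) {n z w : ℤ}
    (h0 : (0:ℤ) ∈ A) (hnn : ∀ x ∈ A, 0 ≤ x) (hcard : (A.card : ℤ) = n + 1) (hn : 4 ≤ n)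
    (hgcd : A.gcd id = 1) (hz : A.max' hA = z)
    (hA'ne : (A.erase z).Nonempty)
    (hw : (A.erase z).max' hA'ne = w) (hwbig : 2*n - 4 ≤ w) :
    n + 1 ≤ (((SetSub (A.erase z)).filter (fun s => s + z ∉ SetSub (A.erase z))).card : ℤ) := by
  classical
  set A' := A.erase z with hA'def
  set S' := SetSub A' with hS'def
  set N' := A'.sum id with hN'def
  set Q := S'.filter (fun s => s + z ∉ S') with hQdef
  have hzmax : ∀ x ∈ A, x ≤ z := by intro x hx; rw [← hz]; exact A.le_max' x hx
  have hnnA' : ∀ x ∈ A', 0 ≤ x := fun x hx => hnn x (Finset.mem_of_mem_erase hx)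
  have h0A' : (0:ℤ) ∈ A' := by
    refine Finset.mem_erase.2 ⟨?_, h0⟩
    intro h; rw [← h] at hzmax
    -- z = 0 means all elements ≤ 0, so A ⊆ {0}, card ≤ 1
    have hsub : A ⊆ Finset.Icc (0:ℤ) 0 := fun x hx => Finset.mem_Icc.2 ⟨hnn x hx, hzmax x hx⟩
    have := card_le_of_subset_Icc hsub le_rfl
    omega
  have hltz : ∀ x ∈ A', x < z := by
    intro x hx
    have h1 := hzmax x (Finset.mem_of_mem_erase hx)
    have h2 := (Finset.mem_erase.1 hx).1
    omega
  have hzA : z ∈ A := by rw [← hz]; exact A.max'_mem hA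
  have hcardA' : (A'.card : ℤ) = n := by
    rw [hA'def, Finset.card_erase_of_mem hzA]
    have : 1 ≤ A.card := Finset.card_pos.2 hA
    push_cast [this]
    omega
  have hwmax : ∀ x ∈ A', x ≤ w := by intro x hx; rw [← hw]; exact _root_.Finset.le_max' _ x hx
  have hwA' : w ∈ A' := by rw [← hw]; exact Finset.max'_mem _ _
  have hwltz : w < z := hltz w hwA'
  have hzn : n ≤ z := by
    have hsub : A ⊆ Finset.Icc (0:ℤ) z := fun x hx => Finset.mem_Icc.2 ⟨hnn x hx, hzmax x hx⟩
    have hz0 : (0:ℤ) ≤ z := hnn z hzA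
    have := card_le_of_subset_Icc hsub hz0
    omega
  have hz0 : (0:ℤ) < z := by omega
  -- suppose card Q ≤ n
  by_contra hcon
  push_neg at hcon
  have hQn : (Q.card : ℤ) ≤ n := by omega
  -- T = image of N' - a
  set T := A'.image (fun a => N' - a) with hTdef
  have hTQ : T ⊆ Q := by
    intro t ht
    obtain ⟨a, haA', rfl⟩ := Finset.mem_image.1 ht
    have h1 : N' - a ∈ S' := setSub_symm h0A' (single_mem_setSub haA')
    refine Finset.mem_filter.2 ⟨h1, ?_⟩
    intro hmem
    have hle := setSub_le_sum hnnA' hmem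
    have := hltz a haA'
    omega
  have hTcard : (T.card : ℤ) = n := by
    rw [hTdef, Finset.card_image_of_injective _ (fun x y h => by omega)]
    exact hcardA'
  have hQT : Q = T := by
    apply (Finset.eq_of_subset_of_card_le hTQ (by omega)).symm
  -- star: every s in S' is congruent to N' - a mod z for some a in A'
  have star : ∀ k : ℕ, ∀ s ∈ S', (N' - s).toNat = k → ∃ a ∈ A', s % z = (N' - a) % z := by
    intro k
    induction k using Nat.strong_induction_on with
    | _ k ih =>
      intro s hs hk
      by_cases hmem : s + z ∈ S'
      · have hsle : s + z ≤ N' := setSub_le_sum hnnA' hmem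
        have hlt : (N' - (s + z)).toNat < k := by omega
        obtain ⟨a, ha, hmod⟩ := ih _ hlt (s + z) hmem rfl
        refine ⟨a, ha, ?_⟩
        rw [← hmod]
        simp [Int.add_emod]
      · have hsQ : s ∈ Q := Finset.mem_filter.2 ⟨hs, hmem⟩
        rw [hQT, hTdef] at hsQ
        obtain ⟨a, ha, heq⟩ := Finset.mem_image.1 hsQ
        exact ⟨a, ha, by rw [heq]⟩
  -- key: every s in S' has s % z in A'
  have key : ∀ s ∈ S', s % z ∈ A' := by
    intro s hs
    obtain ⟨a, ha, hmod⟩ := star _ s hs rfl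
    set R := A'.image (fun a => (N' - a) % z) with hRdef
    have hsubR : A' ⊆ R := by
      intro b hb
      have hbS : b ∈ S' := single_mem_setSub hb
      obtain ⟨a', ha', hmod'⟩ := star _ b hbS rfl
      have hbmod : b % z = b := Int.emod_eq_of_lt (hnnA' b hb) (hltz b hb)
      rw [hbmod] at hmod'
      exact Finset.mem_image.2 ⟨a', ha', hmod'.symm⟩
    have hRcard : R.card ≤ A'.card := Finset.card_image_le
    have hReq : A' = R := Finset.eq_of_subset_of_card_le hsubR hRcard
    rw [hmod, hReq]
    exact Finset.mem_image.2 ⟨a, ha, rfl⟩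
  -- step A
  set q : ℤ := z - w with hqdef
  have hq1 : 1 ≤ q := by omega
  have stepA : ∀ a ∈ A', a ≠ 0 → a ≠ w → (a - q ∈ A' ∧ a - q < w) := by
    intro a haA' ha0 haw
    have ha1 : 1 ≤ a := by have := hnnA' a haA'; omega
    have haltz := hltz a haA'
    have hpair : w + a ∈ S' := pair_mem_setSub hwA' haA' (fun h => haw h.symm)
    have hkey := key _ hpair
    by_cases hlt : w + a < z
    · exfalso
      have : (w + a) % z = w + a := Int.emod_eq_of_lt (by omega) hlt
      rw [this] at hkey
      have := hwmax _ hkey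
      omega
    · have hmod : (w + a) % z = w + a - z := by
        have h1 : (w + a) % z = (w + a - z) % z := by
          conv_lhs => rw [show w + a = (w + a - z) + z by ring]
          simp [Int.add_emod]
        rw [h1]
        exact Int.emod_eq_of_lt (by omega) (by omega)
      rw [hmod] at hkey
      constructor
      · have : w + a - z = a - q := by ring
        rwa [this] at hkey
      · omega
  -- step B
  have stepB : ∀ k : ℕ, ∀ a ∈ A', a < w → a.toNat = k → q ∣ a := by
    intro k
    induction k using Nat.strong_induction_on with
    | _ k ih =>
      intro a haA' haw hk
      by_cases ha0 : a = 0
      · simp [ha0]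
      · have ha1 : 1 ≤ a := by have := hnnA' a haA'; omega
        obtain ⟨hmem, hlt⟩ := stepA a haA' ha0 (by omega)
        have hge : 0 ≤ a - q := hnnA' _ hmem
        have hdvd := ih (a - q).toNat (by omega) (a - q) hmem hlt rfl
        have heq : a = (a - q) + q := by ring
        rw [heq]
        exact dvd_add hdvd dvd_rfl
  -- second and third largest elements
  have hBne : (A'.erase w).Nonempty := by
    rw [← Finset.card_pos]
    have := Finset.card_erase_of_mem hwA'
    omega
  set w2 := (A'.erase w).max' hBne with hw2def
  have hw2mem : w2 ∈ A'.erase w := Finset.max'_mem _ _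
  have hw2A' : w2 ∈ A' := Finset.mem_of_mem_erase hw2mem
  have hw2new : w2 ≠ w := (Finset.mem_erase.1 hw2mem).1
  have hw2ltw : w2 < w := by have := hwmax _ hw2A'; omega
  have hw2max : ∀ x ∈ A'.erase w, x ≤ w2 := fun x hx => Finset.le_max' _ x hx
  have hcardB : ((A'.erase w).card : ℤ) = n - 1 := by
    rw [Finset.card_erase_of_mem hwA']
    have : 1 ≤ A'.card := Finset.card_pos.2 ⟨w, hwA'⟩
    push_cast [this]
    omega
  have hw2ge : n - 2 ≤ w2 := by
    have hsub : A'.erase w ⊆ Finset.Icc (0:ℤ) w2 := fun x hx =>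
      Finset.mem_Icc.2 ⟨hnnA' x (Finset.mem_of_mem_erase hx), hw2max x hx⟩
    have hw20 : (0:ℤ) ≤ w2 := hnnA' _ hw2A'
    have := card_le_of_subset_Icc hsub hw20
    omega
  have hCne : ((A'.erase w).erase w2).Nonempty := by
    rw [← Finset.card_pos]
    have := Finset.card_erase_of_mem hw2mem
    omega
  set w3 := ((A'.erase w).erase w2).max' hCne with hw3def
  have hw3mem : w3 ∈ (A'.erase w).erase w2 := Finset.max'_mem _ _
  have hw3A' : w3 ∈ A' := Finset.mem_of_mem_erase (Finset.mem_of_mem_erase hw3mem)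
  have hw3ne2 : w3 ≠ w2 := (Finset.mem_erase.1 hw3mem).1
  have hw3lt2 : w3 < w2 := by
    have := hw2max _ (Finset.mem_of_mem_erase hw3mem); omega
  have hw3ltw : w3 < w := by omega
  have hw3max : ∀ x ∈ (A'.erase w).erase w2, x ≤ w3 := fun x hx => Finset.le_max' _ x hx
  have hcardC : (((A'.erase w).erase w2).card : ℤ) = n - 2 := by
    rw [Finset.card_erase_of_mem hw2mem]
    have : 1 ≤ (A'.erase w).card := Finset.card_pos.2 hBne
    push_cast [this]
    omega
  have hw3ge : n - 3 ≤ w3 := by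
    have hsub : (A'.erase w).erase w2 ⊆ Finset.Icc (0:ℤ) w3 := fun x hx =>
      Finset.mem_Icc.2 ⟨hnnA' x (Finset.mem_of_mem_erase (Finset.mem_of_mem_erase hx)),
        hw3max x hx⟩
    have hw30 : (0:ℤ) ≤ w3 := hnnA' _ hw3A'
    have := card_le_of_subset_Icc hsub hw30
    omega
  have hw31 : 1 ≤ w3 := by omega
  -- the u-dichotomy
  set u : ℤ := w2 + w3 with hudef
  have huS : u ∈ S' := pair_mem_setSub hw2A' hw3A' (fun h => hw3ne2 h.symm)
  have hukey := key _ huS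
  have hdich : u = w ∨ (z ≤ u ∧ u - z ∈ A' ∧ u - z < w) := by
    by_cases hu : u < z
    · left
      have : u % z = u := Int.emod_eq_of_lt (by omega) hu
      rw [this] at hukey
      by_contra hne
      have humem : u ∈ A'.erase w := Finset.mem_erase.2 ⟨hne, hukey⟩
      have := hw2max _ humem
      omega
    · right
      have hu2 : u < 2 * z := by omega
      have hmod : u % z = u - z := by
        have h1 : u % z = (u - z) % z := by
          conv_lhs => rw [show u = (u - z) + z by ring]
          simp [Int.add_emod]
        rw [h1]
        exact Int.emod_eq_of_lt (by omega) (by omega)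
      rw [hmod] at hukey
      exact ⟨by omega, hukey, by omega⟩
  -- q divides w and z
  have hqw2 : q ∣ w2 := stepB _ w2 hw2A' hw2ltw rfl
  have hqw3 : q ∣ w3 := stepB _ w3 hw3A' hw3ltw rfl
  have hqwz : q ∣ w ∧ q ∣ z := by
    rcases hdich with h | ⟨hzu, hmem, hlt⟩
    · have hqw : q ∣ w := by rw [← h]; exact dvd_add hqw2 hqw3
      refine ⟨hqw, ?_⟩
      have hzeq : z = w + q := by omega
      rw [hzeq]
      exact dvd_add hqw dvd_rfl
    · have hquz : q ∣ (u - z) := by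
        by_cases h2 : u - z = w
        · exfalso; omega
        · exact stepB _ _ hmem hlt rfl
      have hqu : q ∣ u := Dvd.dvd.add hqw2 hqw3
      have hqz : q ∣ z := by
        have : z = u - (u - z) := by ring
        rw [this]; exact dvd_sub hqu hquz
      refine ⟨?_, hqz⟩
      have hweq : w = z - q := by omega
      rw [hweq]
      exact dvd_sub hqz dvd_rfl
  -- q divides everything, hence q = 1
  have hqall : ∀ b ∈ A, q ∣ id b := by
    intro b hb
    simp only [id]
    by_cases hbz : b = z
    · rw [hbz]; exact hqwz.2
    · have hbA' : b ∈ A' := Finset.mem_erase.2 ⟨hbz, hb⟩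
      by_cases hbw : b = w
      · rw [hbw]; exact hqwz.1
      · exact stepB _ b hbA' (by have := hwmax b hbA'; omega) rfl
  have hq1' : q = 1 := by
    have hdvd : q ∣ A.gcd id := Finset.dvd_gcd hqall
    rw [hgcd] at hdvd
    have := Int.le_of_dvd one_pos hdvd
    omega
  -- with q = 1, the set below w is an interval [0, w2]
  have descend : ∀ i : ℕ, (i:ℤ) ≤ w2 → w2 - (i:ℤ) ∈ A'.erase w := by
    intro i
    induction i with
    | zero => intro _; simpa using hw2mem
    | succ i ih =>
      intro hi
      push_cast at hi ⊢
      have hprev : w2 - (i:ℤ) ∈ A'.erase w := ih (by omega)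
      have hprevA' : w2 - (i:ℤ) ∈ A' := Finset.mem_of_mem_erase hprev
      have h1 : w2 - (i:ℤ) ≠ 0 := by omega
      have h2 : w2 - (i:ℤ) ≠ w := (Finset.mem_erase.1 hprev).1
      obtain ⟨hmem, hlt⟩ := stepA _ hprevA' h1 h2
      rw [hq1'] at hmem hlt
      have : w2 - ((i:ℤ) + 1) = w2 - (i:ℤ) - 1 := by ring
      rw [this]
      exact Finset.mem_erase.2 ⟨by omega, hmem⟩
  have hIccsub : Finset.Icc (0:ℤ) w2 ⊆ A'.erase w := by
    intro x hx
    obtain ⟨hx0, hxw2⟩ := Finset.mem_Icc.1 hx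
    have h1 : ((w2 - x).toNat : ℤ) = w2 - x := Int.toNat_of_nonneg (by omega)
    have := descend (w2 - x).toNat (by omega)
    rw [h1] at this
    have heq : w2 - (w2 - x) = x := by ring
    rwa [heq] at this
  have hw2le : w2 ≤ n - 2 := by
    have h1 := Finset.card_le_card hIccsub
    rw [Int.card_Icc] at h1
    have h2 : ((w2 + 1 - 0).toNat : ℤ) = w2 + 1 := by
      rw [Int.toNat_of_nonneg (by omega)]; ring
    have h3 : ((w2 + 1 - 0).toNat : ℤ) ≤ ((A'.erase w).card : ℤ) := by exact_mod_cast h1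
    omega
  have hw2eq : w2 = n - 2 := by omega
  -- set equality and w3 = n - 3
  have hseteq : Finset.Icc (0:ℤ) w2 = A'.erase w := by
    apply Finset.eq_of_subset_of_card_le hIccsub
    have h2 : ((Finset.Icc (0:ℤ) w2).card : ℤ) = w2 + 1 := by
      rw [Int.card_Icc]
      rw [Int.toNat_of_nonneg (by omega)]; push_cast; ring
    omega
  have hw3le : w3 ≤ n - 3 := by
    have h1 : w3 ∈ Finset.Icc (0:ℤ) w2 := by
      rw [hseteq]; exact Finset.mem_of_mem_erase hw3mem
    have := (Finset.mem_Icc.1 h1).2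
    omega
  have hw3eq : w3 = n - 3 := by omega
  -- final contradiction
  rcases hdich with h | ⟨hzu, hmem, hlt⟩
  · omega
  · omega

/-- The simple chain bound. -/
lemma chain_bound : ∀ (N : ℕ) (A : Finset ℤ), (0:ℤ) ∈ A → (∀ x ∈ A, 0 ≤ x) →
    A.card = N → ∀ m : ℤ, (A.card : ℤ) = m + 1 →
    m * (m+1) + 2 ≤ 2 * ((SetSub A).card : ℤ) := by
  intro N
  induction N using Nat.strong_induction_on with
  | _ N ih =>
    intro A h0 hnn hN m hm
    have hAne : A.Nonempty := ⟨0, h0⟩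
    have hm0 : 0 ≤ m := by
      have : 1 ≤ A.card := Finset.card_pos.2 hAne
      omega
    by_cases hm1 : m = 0
    · -- card S ≥ 1
      have h1 : (0:ℤ) ∈ SetSub A := zero_mem_setSub h0
      have : 1 ≤ (SetSub A).card := Finset.card_pos.2 ⟨0, h1⟩
      have : (1:ℤ) ≤ ((SetSub A).card : ℤ) := by exact_mod_cast this
      rw [hm1]; omega
    · -- m ≥ 1
      set z := A.max' hAne with hzdef
      have hzmax : ∀ x ∈ A, x ≤ z := fun x hx => A.le_max' x hx
      have hzA : z ∈ A := A.max'_mem hAne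
      have hz0 : (0:ℤ) ≤ z := hnn z hzA
      have hzpos : 0 < z := by
        rcases lt_or_eq_of_le hz0 with h | h
        · exact h
        · exfalso
          have hsub : A ⊆ Finset.Icc (0:ℤ) 0 := fun x hx =>
            Finset.mem_Icc.2 ⟨hnn x hx, by rw [h]; exact hzmax x hx⟩
          have := card_le_of_subset_Icc hsub le_rfl
          omega
      set A' := A.erase z with hA'def
      have h0A' : (0:ℤ) ∈ A' := Finset.mem_erase.2 ⟨by omega, h0⟩
      have hnnA' : ∀ x ∈ A', 0 ≤ x := fun x hx => hnn x (Finset.mem_of_mem_erase hx)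
      have hcardA' : (A'.card : ℤ) = m := by
        rw [hA'def, Finset.card_erase_of_mem hzA]
        have : 1 ≤ A.card := Finset.card_pos.2 hAne
        push_cast [this]
        omega
      have hcard' : A'.card = N - 1 := by omega
      have hNpos : 1 ≤ N := by omega
      have hIH := ih (N-1) (by omega) A' h0A' hnnA' hcard' (m-1) (by rw [hcardA']; ring)
      -- increment
      have hinc := card_setSub_ge_increment hzA
      have hlow := card_Q_ge_low (A := A) (z := z) h0A' hnnA'
      have hsubV : A' ⊆ (SetSub A').filter (fun s => s < z) := by
        intro x hx
        refine Finset.mem_filter.2 ⟨single_mem_setSub hx, ?_⟩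
        have h1 := hzmax x (Finset.mem_of_mem_erase hx)
        have h2 := (Finset.mem_erase.1 hx).1
        omega
      have hV := Finset.card_le_card hsubV
      have hq : (A'.card : ℤ) ≤ (((SetSub A').filter (fun s => s + z ∉ SetSub A')).card : ℤ) := by
        exact_mod_cast le_trans hV hlow
      have hc1 : ((SetSub A').card : ℤ) + (((SetSub A').filter
          (fun s => s + z ∉ SetSub A')).card : ℤ) ≤ ((SetSub A).card : ℤ) := by
        exact_mod_cast hinc
      nlinarith [hIH, hq, hc1, hcardA']

/-- Main counting bound. -/
theorem main_bound : ∀ (N : ℕ) (A : Finset ℤ) (hA : A.Nonempty) (n : ℤ),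
    A.card = N → (0:ℤ) ∈ A → (∀ x ∈ A, 0 ≤ x) → (A.card : ℤ) = n + 1 → 3 ≤ n →
    A.gcd id = 1 →
    n * (n+1) + 2 + 2 * min (A.max' hA - n) (n - 3) ≤ 2 * ((SetSub A).card : ℤ) := by
  intro N
  induction N using Nat.strong_induction_on with
  | _ N ih =>
    intro A hAne n hN h0 hnn hcard hn3 hgcd
    set z := A.max' hAne with hzdef
    have hzmax : ∀ x ∈ A, x ≤ z := fun x hx => A.le_max' x hx
    have hzA : z ∈ A := A.max'_mem hAne
    have hz0 : (0:ℤ) ≤ z := hnn z hzA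
    have hzn : n ≤ z := by
      have hsub : A ⊆ Finset.Icc (0:ℤ) z := fun x hx =>
        Finset.mem_Icc.2 ⟨hnn x hx, hzmax x hx⟩
      have := card_le_of_subset_Icc hsub hz0
      omega
    set A' := A.erase z with hA'def
    have h0A' : (0:ℤ) ∈ A' := Finset.mem_erase.2 ⟨by omega, h0⟩
    have hA'ne : A'.Nonempty := ⟨0, h0A'⟩
    have hnnA' : ∀ x ∈ A', 0 ≤ x := fun x hx => hnn x (Finset.mem_of_mem_erase hx)
    have hcardA' : (A'.card : ℤ) = n := by
      rw [hA'def, Finset.card_erase_of_mem hzA]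
      have : 1 ≤ A.card := Finset.card_pos.2 hAne
      push_cast [this]
      omega
    have hltz : ∀ x ∈ A', x < z := by
      intro x hx
      have h1 := hzmax x (Finset.mem_of_mem_erase hx)
      have h2 := (Finset.mem_erase.1 hx).1
      omega
    set w := A'.max' hA'ne with hwdef
    have hwA' : w ∈ A' := A'.max'_mem hA'ne
    have hwmax : ∀ x ∈ A', x ≤ w := fun x hx => A'.le_max' x hx
    have hw0 : (0:ℤ) ≤ w := hnnA' w hwA'
    have hwn : n - 1 ≤ w := by
      have hsub : A' ⊆ Finset.Icc (0:ℤ) w := fun x hx =>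
        Finset.mem_Icc.2 ⟨hnnA' x hx, hwmax x hx⟩
      have := card_le_of_subset_Icc hsub hw0
      omega
    have hwltz : w < z := hltz w hwA'
    -- increment inequalities (shared)
    have hinc := card_setSub_ge_increment hzA
    have hlow := card_Q_ge_low (A := A) (z := z) h0A' hnnA'
    have hc1 : ((SetSub A').card : ℤ) + (((SetSub A').filter
        (fun s => s + z ∉ SetSub A')).card : ℤ) ≤ ((SetSub A).card : ℤ) := by
      exact_mod_cast hinc
    by_cases hbase : n = 3
    · -- chain bound suffices
      have := chain_bound N A h0 hnn hN n hcard
      have hmin : min (z - n) (n - 3) ≤ 0 := by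
        rw [hbase]; simp
      omega
    · have hn4 : 4 ≤ n := by omega
      by_cases hgcd' : A'.gcd id = 1
      · -- cases II / III
        have hIH := ih A'.card (by omega) A' hA'ne (n-1) rfl h0A' hnnA'
            (by rw [hcardA']; ring) (by omega) hgcd'
        rw [← hwdef] at hIH
        by_cases hw2n : w ≤ 2*n - 5
        · -- Case II : slice
          set δ' : ℤ := w - (n - 1) with hδ'def
          have hδ'0 : 0 ≤ δ' := by omega
          set cap : ℤ := min (z - 1 - w) ((n - 1) - 1 - δ') with hcapdef
          have hcap0 : 0 ≤ cap := by omega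
          -- V = A' ∪ slice interval
          set V : Finset ℤ := A' ∪ Finset.Icc (w+1) (w+cap) with hVdef
          have hVsub : V ⊆ (SetSub A').filter (fun s => s < z) := by
            intro x hx
            rcases Finset.mem_union.1 hx with h | h
            · exact Finset.mem_filter.2 ⟨single_mem_setSub h, hltz x h⟩
            · obtain ⟨h1, h2⟩ := Finset.mem_Icc.1 h
              refine Finset.mem_filter.2 ⟨?_, by omega⟩
              have := slice_mem (m := n - 1) hA'ne h0A' hnnA' hwdef.symm
                  (by rw [hcardA']; ring) (y := x - w) (by omega) (by omega)
              have hxw : w + (x - w) = x := by ring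
              rwa [hxw] at this
          have hVcard : (V.card : ℤ) = n + cap := by
            rw [hVdef, Finset.card_union_of_disjoint]
            · have h1 : ((Finset.Icc (w+1) (w+cap)).card : ℤ) = cap := by
                rw [Int.card_Icc]
                rw [Int.toNat_of_nonneg (by omega)]
                ring
              push_cast [h1]
              omega
            · rw [Finset.disjoint_right]
              intro x hx hxA'
              obtain ⟨h1, h2⟩ := Finset.mem_Icc.1 hx
              have := hwmax x hxA'
              omega
          have hq : (V.card : ℤ) ≤ (((SetSub A').filter
              (fun s => s + z ∉ SetSub A')).card : ℤ) := by
            exact_mod_cast le_trans (Finset.card_le_card hVsub) hlow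
          -- arithmetic
          have hminIH : min (w - (n-1)) ((n-1) - 3) = δ' := by
            apply min_eq_left
            omega
          rw [hminIH] at hIH
          have hd : z - n = δ' + (z - 1 - w) := by omega
          have hgoalmin : min (z - n) (n - 3) ≤ δ' + cap := by omega
          nlinarith [hIH, hq, hc1, hVcard]
        · -- Case III : incplus
          have hwbig : 2*n - 4 ≤ w := by omega
          have hq := incplus hAne h0 hnn hcard hn4 hgcd hzdef.symm hA'ne hwdef.symm hwbig
          have hminIH : min (w - (n-1)) ((n-1) - 3) = (n-1) - 3 :=
            min_eq_right (by omega)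
          rw [hminIH] at hIH
          have hgoalmin : min (z - n) (n - 3) ≤ n - 3 := min_le_right _ _
          nlinarith [hIH, hq, hc1]
      · -- Case I : gcd of A' is not 1
        have hg := hgcd'
        set g : ℤ := A'.gcd id with hgdef
        have hg0 : 0 ≤ g := Int.nonneg_of_normalize_eq_self Finset.normalize_gcd
        have hgdvd : ∀ x ∈ A', g ∣ x := fun x hx => Finset.gcd_dvd hx
        have hgz : ¬ g ∣ z := by
          intro hdvd
          have : ∀ b ∈ A, g ∣ id b := by
            intro b hb
            by_cases hbz : b = z
            · rw [hbz]; exact hdvd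
            · exact hgdvd b (Finset.mem_erase.2 ⟨hbz, hb⟩)
          have h2 : g ∣ A.gcd id := Finset.dvd_gcd this
          rw [hgcd] at h2
          have h3 := Int.le_of_dvd one_pos h2
          have h4 : g ≠ 0 := by
            intro h
            rw [h] at h2
            norm_num at h2
          have : g = 1 := by omega
          exact hg this
        -- all sums of A' divisible by g
        have hsdvd : ∀ s ∈ SetSub A', g ∣ s := by
          intro s hs
          obtain ⟨B, hBA, _, rfl⟩ := mem_setSub.1 hs
          exact Finset.dvd_sum fun i hi => hgdvd i (hBA hi)
        -- Q is everything
        have hQall : (SetSub A').filter (fun s => s + z ∉ SetSub A') = SetSub A' := by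
          apply Finset.filter_true_of_mem
          intro s hs hmem
          have h1 := hsdvd s hs
          have h2 := hsdvd _ hmem
          have : g ∣ z := by
            have : z = (s + z) - s := by ring
            rw [this]
            exact dvd_sub h2 h1
          exact hgz this
        have hchain := chain_bound A'.card A' h0A' hnnA' rfl (n-1)
            (by rw [hcardA']; ring)
        have hq : ((SetSub A').card : ℤ) ≤ (((SetSub A').filter
            (fun s => s + z ∉ SetSub A')).card : ℤ) := by
          rw [hQall]
        have hgoalmin : min (z - n) (n - 3) ≤ n - 3 := min_le_right _ _
        nlinarith [hq, hc1, hchain, hgoalmin,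
          mul_nonneg (by omega : (0:ℤ) ≤ n - 2) (by omega : (0:ℤ) ≤ n - 3)]

theorem freiman_subset_sum_zero (k : ℕ) (hk : 4 ≤ k) (a : ℕ → ℤ) (h0 : a 0 = 0)
    (ha : ∀ i j, i < j → j ≤ k - 1 → a i < a j)
    (hgcd : (Finset.range k).gcd a = 1) :
    (a (k - 1) ≤ 2 * (k : ℤ) - 5 →
      a (k - 1) + ((k : ℤ) - 1) * ((k : ℤ) - 2) / 2 + 1
        ≤ ((SetSub ((Finset.range k).image a)).card : ℤ)) ∧
    (2 * (k : ℤ) - 4 ≤ a (k - 1) →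
      theta * (k : ℝ) - 3 + ((k : ℝ) - 1) * ((k : ℝ) - 2) / 2
        ≤ ((SetSub ((Finset.range k).image a)).card : ℝ)) := by
  classical
  set A := (Finset.range k).image a with hAdef
  have hmono : ∀ i j, i < j → j < k → a i < a j := fun i j hij hjk =>
    ha i j hij (by omega)
  have h0A : (0:ℤ) ∈ A := by
    rw [hAdef]
    exact Finset.mem_image.2 ⟨0, Finset.mem_range.2 (by omega), h0⟩
  have hAne : A.Nonempty := ⟨0, h0A⟩
  have hnn : ∀ x ∈ A, (0:ℤ) ≤ x := by
    intro x hx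
    obtain ⟨i, hi, rfl⟩ := Finset.mem_image.1 hx
    rcases Nat.eq_zero_or_pos i with h | h
    · rw [h, h0]
    · have := hmono 0 i h (Finset.mem_range.1 hi)
      rw [h0] at this
      omega
  have hinj : Set.InjOn a (Finset.range k) := by
    intro i hi j hj hij
    by_contra hne
    rcases Nat.lt_or_ge i j with h | h
    · have := hmono i j h (Finset.mem_range.1 hj); omega
    · have hji : j < i := by omega
      have := hmono j i hji (Finset.mem_range.1 hi); omega
  have hcard : A.card = k := by
    rw [hAdef, Finset.card_image_of_injOn hinj, Finset.card_range]
  have hmax : A.max' hAne = a (k-1) := by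
    apply le_antisymm
    · apply Finset.max'_le
      intro x hx
      obtain ⟨i, hi, rfl⟩ := Finset.mem_image.1 hx
      have hik : i ≤ k - 1 := by have := Finset.mem_range.1 hi; omega
      rcases Nat.eq_or_lt_of_le hik with h | h
      · rw [h]
      · exact le_of_lt (hmono i (k-1) h (by omega))
    · apply Finset.le_max'
      exact Finset.mem_image.2 ⟨k-1, Finset.mem_range.2 (by omega), rfl⟩
  have hgcdA : A.gcd id = 1 := by
    rw [hAdef, Finset.gcd_image]
    simpa using hgcd
  set n : ℤ := (k : ℤ) - 1 with hndef
  have hn3 : 3 ≤ n := by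
    have : (4:ℤ) ≤ (k:ℤ) := by exact_mod_cast hk
    omega
  have hcardn : (A.card : ℤ) = n + 1 := by rw [hcard]; omega
  have hmain := main_bound A.card A hAne n rfl h0A hnn hcardn hn3 hgcdA
  rw [hmax] at hmain
  set z := a (k-1) with hzdef
  set c : ℤ := ((SetSub A).card : ℤ) with hcdef
  constructor
  · intro hcase
    -- min = z - n
    have hmin : min (z - n) (n - 3) = z - n := min_eq_left (by omega)
    rw [hmin] at hmain
    -- division
    have heven : (2:ℤ) ∣ ((k:ℤ) - 1) * ((k:ℤ) - 2) := by
      rcases Int.even_or_odd ((k:ℤ) - 1) with h | h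
      · exact Dvd.dvd.mul_right h.two_dvd _
      · have : Even ((k:ℤ) - 2) := by
          rcases h with ⟨m, hm⟩
          exact ⟨m, by omega⟩
        exact Dvd.dvd.mul_left this.two_dvd _
      
    obtain ⟨e, he⟩ := heven
    have hdiv : ((k:ℤ) - 1) * ((k:ℤ) - 2) / 2 = e := by rw [he]; omega
    rw [hdiv]
    nlinarith [hmain]
  · intro hcase
    have hmin : min (z - n) (n - 3) = n - 3 := min_eq_right (by omega)
    rw [hmin] at hmain
    -- real inequality
    have hsqrt : Real.sqrt 5 ≤ 5/2 := by
      rw [show (5:ℝ)/2 = Real.sqrt ((5/2)^2) by rw [Real.sqrt_sq (by norm_num)]]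
      exact Real.sqrt_le_sqrt (by norm_num)
    have hK : (4:ℝ) ≤ (k:ℝ) := by exact_mod_cast hk
    have hmainR : ((n:ℝ)) * (n+1) + 2 + 2*((n:ℝ) - 3) ≤ 2 * ((SetSub A).card : ℝ) := by
      have := hmain
      have h2 : ((n * (n+1) + 2 + 2 * (n - 3) : ℤ) : ℝ) ≤ ((2 * c : ℤ) : ℝ) := by
        exact_mod_cast this
      push_cast at h2
      convert h2 using 2 <;> push_cast [hcdef] <;> ring
    have hnR : (n:ℝ) = (k:ℝ) - 1 := by push_cast [hndef]; ring
    rw [hnR] at hmainR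
    rw [theta]
    nlinarith [hmainR, hsqrt, hK]
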